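/- If λ_i < S^0 < μ_i for some i with x_i(0) > 0, then S(t) < S^0 for all sufficiently large t along any solution of the chemostat system with positive initial conditions. -/

import Mathlib

open Set

private lemma mono_Icc_aux {f f' : ℝ → ℝ} {a b : ℝ} (hab : a ≤ b)
    (hd : ∀ t ∈ Set.Icc a b, HasDerivAt f (f' t) t)
    (h0 : ∀ t ∈ Set.Ioo a b, 0 ≤ f' t) : f a ≤ f b := by
  have hc : ContinuousOn f (Set.Icc a b) := fun t ht =>
    (hd t ht).continuousAt.continuousWithinAt
  have hm : MonotoneOn f (Set.Icc a b) := by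
    apply monotoneOn_of_deriv_nonneg (convex_Icc a b) hc
    · intro t ht
      rw [interior_Icc] at ht
      exact (hd t (Set.Ioo_subset_Icc_self ht)).differentiableAt.differentiableWithinAt
    · intro t ht
      rw [interior_Icc] at ht
      rw [(hd t (Set.Ioo_subset_Icc_self ht)).deriv]
      exact h0 t ht
  exact hm (Set.left_mem_Icc.2 hab) (Set.right_mem_Icc.2 hab) hab

private lemma anti_Icc_aux {f f' : ℝ → ℝ} {a b : ℝ} (hab : a ≤ b)
    (hd : ∀ t ∈ Set.Icc a b, HasDerivAt f (f' t) t)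
    (h0 : ∀ t ∈ Set.Ioo a b, f' t ≤ 0) : f b ≤ f a := by
  have h := mono_Icc_aux (f := fun t => -f t) (f' := fun t => -f' t) hab
    (fun t ht => (hd t ht).neg) (fun t ht => neg_nonneg.2 (h0 t ht))
  simpa using h

private lemma expd_aux (c t : ℝ) :
    HasDerivAt (fun u : ℝ => Real.exp (c * u)) (Real.exp (c * t) * c) t := by
  have h1 : HasDerivAt (fun u : ℝ => c * u) c t := by
    simpa using (hasDerivAt_id t).const_mul c
  exact (Real.hasDerivAt_exp (c * t)).comp t h1

/-- If `λᵢ < S⁰ < μᵢ` for some `i` with `xᵢ(0) > 0`, then `S(t) < S⁰`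
for all sufficiently large `t` along any solution with positive initial conditions.
The break-even concentrations `λᵢ ≤ μᵢ` (possibly `+∞`, hence `EReal`-valued) are
characterized by `pᵢ(S) < Dᵢ` for `S ∉ [λᵢ, μᵢ]` and `pᵢ(S) > Dᵢ` for `S ∈ (λᵢ, μᵢ)`. -/
theorem chemostat_S_eventually_below_S0
    (n : ℕ) (S0 D : ℝ) (Di : Fin n → ℝ)
    (f p : Fin n → ℝ → ℝ)
    (hS0 : 0 < S0) (hD : 0 < D) (hDi : ∀ i, 0 < Di i)
    (hfL : ∀ i, LocallyLipschitz (f i)) (hpL : ∀ i, LocallyLipschitz (p i))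
    (hf0 : ∀ i, f i 0 = 0) (hp0 : ∀ i, p i 0 = 0)
    (hfpos : ∀ i, ∀ s > (0:ℝ), 0 < f i s) (hppos : ∀ i, ∀ s > (0:ℝ), 0 < p i s)
    (lam mu : Fin n → EReal) (hlammu : ∀ j, lam j ≤ mu j)
    (hbelow : ∀ j, ∀ s : ℝ, 0 ≤ s → ((s : EReal) < lam j ∨ mu j < (s : EReal)) →
      p j s < Di j)
    (habove : ∀ j, ∀ s : ℝ, lam j < (s : EReal) → (s : EReal) < mu j →
      Di j < p j s)
    (S : ℝ → ℝ) (x : Fin n → ℝ → ℝ)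
    (hSode : ∀ t ∈ Ici (0:ℝ),
      HasDerivAt S (D * (S0 - S t) - ∑ i, f i (S t) * x i t) t)
    (hxode : ∀ i, ∀ t ∈ Ici (0:ℝ),
      HasDerivAt (x i) ((p i (S t) - Di i) * x i t) t)
    (hS_init : 0 ≤ S 0) (hx_init : ∀ j, 0 < x j 0)
    (i : Fin n) (hi : lam i < (S0 : EReal) ∧ (S0 : EReal) < mu i) :
    ∃ T : ℝ, ∀ t ≥ T, S t < S0 := by
  -- continuity facts
  have hSc : ∀ t ≥ (0:ℝ), ContinuousAt S t := fun t ht => (hSode t ht).continuousAt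
  have hxc : ∀ j, ∀ t ≥ (0:ℝ), ContinuousAt (x j) t :=
    fun j t ht => (hxode j t ht).continuousAt
  -- positivity of x j
  have hxpos : ∀ j, ∀ t ≥ (0:ℝ), 0 < x j t := by
    intro j
    by_contra h
    push_neg at h
    obtain ⟨t1, ht1, ht1x⟩ := h
    set Z : Set ℝ := Icc 0 t1 ∩ (x j) ⁻¹' (Iic 0) with hZdef
    have hZc : IsClosed Z :=
      ContinuousOn.preimage_isClosed_of_isClosed
        (fun t ht => (hxc j t ht.1).continuousWithinAt) isClosed_Icc isClosed_Iic
    have hZne : Z.Nonempty := ⟨t1, ⟨ht1, le_refl t1⟩, ht1x⟩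
    have hZbdd : BddBelow Z := ⟨0, fun t ht => ht.1.1⟩
    have ht2mem : sInf Z ∈ Z := hZc.csInf_mem hZne hZbdd
    set t2 := sInf Z with ht2def
    have ht2nn : 0 ≤ t2 := ht2mem.1.1
    have hx2 : x j t2 ≤ 0 := ht2mem.2
    have hxlt : ∀ t ∈ Ico (0:ℝ) t2, 0 < x j t := by
      intro t ht
      by_contra hc
      push_neg at hc
      have htZ : t ∈ Z := ⟨⟨ht.1, le_trans ht.2.le ht2mem.1.2⟩, hc⟩
      exact absurd (csInf_le hZbdd htZ) (not_le.2 ht.2)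
    obtain ⟨K, hK⟩ := (isCompact_Icc (a := (0:ℝ)) (b := t2)).exists_bound_of_continuousOn
      (f := fun t => p j (S t) - Di j)
      (fun t ht => (((hpL j).continuous.continuousAt).comp (hSc t ht.1)
        |>.sub continuousAt_const).continuousWithinAt)
    have hmono : x j 0 * Real.exp (K * 0) ≤ x j t2 * Real.exp (K * t2) := by
      apply mono_Icc_aux (f := fun t => x j t * Real.exp (K * t))
        (f' := fun t => (p j (S t) - Di j) * x j t * Real.exp (K * t)
          + x j t * (Real.exp (K * t) * K)) ht2nn
      · intro t ht
        exact (hxode j t ht.1).mul (expd_aux K t)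
      · intro t ht
        have h1 := hK t ⟨ht.1.le, ht.2.le⟩
        rw [Real.norm_eq_abs] at h1
        obtain ⟨h1a, h1b⟩ := abs_le.1 h1
        have hx' : 0 < x j t := hxlt t ⟨ht.1.le, ht.2⟩
        have heq : (p j (S t) - Di j) * x j t * Real.exp (K * t)
            + x j t * (Real.exp (K * t) * K)
            = ((p j (S t) - Di j) + K) * x j t * Real.exp (K * t) := by ring
        rw [heq]
        have : 0 ≤ (p j (S t) - Di j) + K := by linarith
        positivity
    have he0 : Real.exp (K * 0) = 1 := by norm_num
    rw [he0, mul_one] at hmono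
    have he2 : (0:ℝ) < Real.exp (K * t2) := Real.exp_pos _
    nlinarith [hx_init j]
  -- nonnegativity of S
  have hSnn : ∀ t ≥ (0:ℝ), 0 ≤ S t := by
    intro t1 ht1
    by_contra hc
    push_neg at hc
    set Z : Set ℝ := Icc 0 t1 ∩ S ⁻¹' (Ici 0) with hZdef
    have hZc : IsClosed Z :=
      ContinuousOn.preimage_isClosed_of_isClosed
        (fun t ht => (hSc t ht.1).continuousWithinAt) isClosed_Icc isClosed_Ici
    have h0Z : (0:ℝ) ∈ Z := ⟨⟨le_refl 0, ht1⟩, hS_init⟩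
    have hZbdd : BddAbove Z := ⟨t1, fun t ht => ht.1.2⟩
    have ht0mem : sSup Z ∈ Z := hZc.csSup_mem ⟨0, h0Z⟩ hZbdd
    set t0 := sSup Z with ht0def
    have ht0nn : 0 ≤ t0 := ht0mem.1.1
    have hSt0nn : 0 ≤ S t0 := ht0mem.2
    have ht0lt : t0 < t1 := lt_of_le_of_ne ht0mem.1.2 (by
      intro heq; rw [heq] at hSt0nn; exact absurd hSt0nn (not_le.2 hc))
    have hneg : ∀ t ∈ Ioc t0 t1, S t < 0 := by
      intro t ht
      by_contra hc2
      push_neg at hc2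
      have htZ : t ∈ Z := ⟨⟨le_trans ht0nn ht.1.le, ht.2⟩, hc2⟩
      exact absurd (le_csSup hZbdd htZ) (not_le.2 ht.1)
    have hSt0 : S t0 = 0 := by
      refine le_antisymm ?_ hSt0nn
      have htend : Filter.Tendsto S (nhdsWithin t0 (Ioi t0)) (nhds (S t0)) :=
        ((hSc t0 ht0nn).tendsto).mono_left nhdsWithin_le_nhds
      refine le_of_tendsto htend ?_
      filter_upwards [Ioc_mem_nhdsGT_of_mem
        (⟨le_refl t0, ht0lt⟩ : t0 ∈ Ico t0 t1)] with t ht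
      exact (hneg t ht).le
    have hd := hSode t0 ht0nn
    have heq : D * (S0 - S t0) - ∑ j, f j (S t0) * x j t0 = D * S0 := by
      rw [hSt0]; simp [hf0]
    rw [heq] at hd
    have hslope := hasDerivAt_iff_tendsto_slope.1 hd
    have hev : ∀ᶠ t in nhdsWithin t0 {t0}ᶜ, 0 < slope S t0 t :=
      hslope.eventually (eventually_gt_nhds (by positivity))
    have hev2 : ∀ᶠ t in nhdsWithin t0 (Ioi t0), 0 < slope S t0 t :=
      hev.filter_mono (nhdsWithin_mono t0 (fun y hy => ne_of_gt hy))
    have hev3 : ∀ᶠ t in nhdsWithin t0 (Ioi t0), t ∈ Ioc t0 t1 :=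
      Filter.eventually_of_mem
        (Ioc_mem_nhdsGT_of_mem (⟨le_refl t0, ht0lt⟩ : t0 ∈ Ico t0 t1))
        (fun t ht => ht)
    obtain ⟨t, hts, htm⟩ := (hev2.and hev3).exists
    have hlt : slope S t0 t < 0 := by
      rw [slope_def_field]
      apply div_neg_of_neg_of_pos
      · rw [hSt0]; simpa using hneg t htm
      · linarith [htm.1]
    exact absurd hts (not_lt.2 hlt.le)
  -- f j nonneg along S
  have hfnn : ∀ j, ∀ t ≥ (0:ℝ), 0 ≤ f j (S t) := by
    intro j t ht
    rcases (hSnn t ht).eq_or_lt with h | h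
    · rw [← h, hf0]
    · exact (hfpos j _ h).le
  -- decay of (S - S0) * exp(D t)
  have hdecay : ∀ t0, 0 ≤ t0 → ∀ t, t0 ≤ t →
      (S t - S0) * Real.exp (D * t) ≤ (S t0 - S0) * Real.exp (D * t0) := by
    intro t0 h0 t ht
    apply anti_Icc_aux (f := fun u => (S u - S0) * Real.exp (D * u))
      (f' := fun u => (D * (S0 - S u) - ∑ j, f j (S u) * x j u) * Real.exp (D * u)
        + (S u - S0) * (Real.exp (D * u) * D)) ht
    · intro u hu
      exact ((hSode u (le_trans h0 hu.1)).sub_const S0).mul (expd_aux D u)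
    · intro u hu
      have hu0 : (0:ℝ) ≤ u := le_trans h0 hu.1.le
      have hsum : 0 ≤ ∑ j, f j (S u) * x j u :=
        Finset.sum_nonneg (fun j _ => mul_nonneg (hfnn j u hu0) (hxpos j u hu0).le)
      have heq : (D * (S0 - S u) - ∑ j, f j (S u) * x j u) * Real.exp (D * u)
          + (S u - S0) * (Real.exp (D * u) * D)
          = -(∑ j, f j (S u) * x j u) * Real.exp (D * u) := by ring
      rw [heq]
      have := Real.exp_pos (D * u)
      nlinarith
  by_cases hcase : ∃ t0 ≥ (0:ℝ), S t0 < S0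
  · obtain ⟨t0, ht0, hlt⟩ := hcase
    refine ⟨t0, fun t ht => ?_⟩
    have h := hdecay t0 ht0 t ht
    have h1 : (S t - S0) * Real.exp (D * t) < 0 :=
      lt_of_le_of_lt h (mul_neg_of_neg_of_pos (by linarith) (Real.exp_pos _))
    by_contra hc
    push_neg at hc
    exact absurd (mul_nonneg (by linarith) (Real.exp_nonneg _)) (not_le.2 h1)
  · push_neg at hcase
    exfalso
    -- choose r with S0 < r and (r : EReal) < mu i
    obtain ⟨z, hz1, hz2⟩ := exists_between hi.2
    have hzt : z ≠ ⊤ := (lt_of_lt_of_le hz2 le_top).ne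
    have hzb : z ≠ ⊥ := (lt_trans (EReal.bot_lt_coe S0) hz1).ne'
    set r := z.toReal with hrdef
    have hzr : (r : EReal) = z := EReal.coe_toReal hzt hzb
    have hrS0 : S0 < r := by
      rw [← EReal.coe_lt_coe_iff]; rw [hzr]; exact hz1
    have hrmu : (r : EReal) < mu i := by rw [hzr]; exact hz2
    have hKset : ∀ s ∈ Icc S0 r, Di i < p i s ∧ 0 < f i s := by
      intro s hs
      have h1 : lam i < (s : EReal) :=
        lt_of_lt_of_le hi.1 (EReal.coe_le_coe_iff.2 hs.1)
      have h2 : (s : EReal) < mu i :=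
        lt_of_le_of_lt (EReal.coe_le_coe_iff.2 hs.2) hrmu
      exact ⟨habove i s h1 h2, hfpos i s (lt_of_lt_of_le hS0 hs.1)⟩
    obtain ⟨s2, hs2m, hs2min⟩ := (isCompact_Icc (a := S0) (b := r)).exists_isMinOn
      (nonempty_Icc.2 hrS0.le) ((hfL i).continuous.continuousOn)
    have hc : 0 < f i s2 := (hKset s2 hs2m).2
    -- eventually S t ∈ [S0, r]
    have htend : Filter.Tendsto (fun t : ℝ => (S 0 - S0) * Real.exp (-(D * t)))
        Filter.atTop (nhds 0) := by
      have h1 : Filter.Tendsto (fun t : ℝ => D * t) Filter.atTop Filter.atTop :=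
        Filter.Tendsto.const_mul_atTop hD Filter.tendsto_id
      have h2 : Filter.Tendsto (fun t : ℝ => -(D * t)) Filter.atTop Filter.atBot :=
        Filter.tendsto_neg_atTop_atBot.comp h1
      have h3 : Filter.Tendsto (fun t : ℝ => Real.exp (-(D * t)))
          Filter.atTop (nhds 0) := Real.tendsto_exp_atBot.comp h2
      simpa using h3.const_mul (S 0 - S0)
    have hev : ∀ᶠ t in Filter.atTop,
        (S 0 - S0) * Real.exp (-(D * t)) ≤ r - S0 :=
      htend.eventually (eventually_le_nhds (by linarith))
    obtain ⟨T1, hT1⟩ := Filter.eventually_atTop.1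
      (hev.and (Filter.eventually_ge_atTop (0:ℝ)))
    have hT1nn : 0 ≤ T1 := (hT1 T1 le_rfl).2
    have hup : ∀ t ≥ (0:ℝ), S t ≤ S0 + (S 0 - S0) * Real.exp (-(D * t)) := by
      intro t ht
      have h := hdecay 0 le_rfl t ht
      rw [mul_zero, Real.exp_zero, mul_one] at h
      have h2 := mul_le_mul_of_nonneg_right h (Real.exp_nonneg (-(D * t)))
      rw [mul_assoc, ← Real.exp_add] at h2
      have h3 : D * t + -(D * t) = 0 := by ring
      rw [h3, Real.exp_zero, mul_one] at h2
      linarith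
    have hSin : ∀ t ≥ T1, S t ∈ Icc S0 r := by
      intro t ht
      have ht0 : (0:ℝ) ≤ t := le_trans hT1nn ht
      refine ⟨hcase t ht0, ?_⟩
      have h1 := (hT1 t ht).1
      have h2 := hup t ht0
      linarith
    have hm : 0 < x i T1 := hxpos i T1 hT1nn
    have hxge : ∀ t ≥ T1, x i T1 ≤ x i t := by
      intro t ht
      apply mono_Icc_aux (f' := fun u => (p i (S u) - Di i) * x i u) ht
      · intro u hu
        exact hxode i u (le_trans hT1nn hu.1)
      · intro u hu
        have hu0 : (0:ℝ) ≤ u := le_trans hT1nn hu.1.le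
        have hpge := (hKset (S u) (hSin u hu.1.le)).1
        exact mul_nonneg (by linarith) (hxpos i u hu0).le
    -- S decreases at rate at least c*m past T1
    have hphi : ∀ t ≥ T1, S t + f i s2 * x i T1 * t ≤ S T1 + f i s2 * x i T1 * T1 := by
      intro t ht
      apply anti_Icc_aux (f := fun u => S u + f i s2 * x i T1 * u)
        (f' := fun u => (D * (S0 - S u) - ∑ j, f j (S u) * x j u)
          + f i s2 * x i T1) ht
      · intro u hu
        have h1 : HasDerivAt (fun y : ℝ => f i s2 * x i T1 * y)
            (f i s2 * x i T1) u := by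
          simpa using (hasDerivAt_id u).const_mul (f i s2 * x i T1)
        exact (hSode u (le_trans hT1nn hu.1)).add h1
      · intro u hu
        have huT : T1 ≤ u := hu.1.le
        have hu0 : (0:ℝ) ≤ u := le_trans hT1nn huT
        have hSu := hSin u huT
        have h1 : D * (S0 - S u) ≤ 0 :=
          mul_nonpos_of_nonneg_of_nonpos hD.le (by linarith [hSu.1])
        have h2 : f i s2 * x i T1 ≤ f i (S u) * x i u :=
          mul_le_mul (isMinOn_iff.1 hs2min (S u) hSu) (hxge u huT) hm.le
            (hKset (S u) hSu).2.le
        have h3 : f i (S u) * x i u ≤ ∑ j, f j (S u) * x j u :=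
          Finset.single_le_sum
            (fun j _ => mul_nonneg (hfnn j u hu0) (hxpos j u hu0).le)
            (Finset.mem_univ i)
        linarith
    set cm := f i s2 * x i T1 with hcmdef
    have hcm : 0 < cm := mul_pos hc hm
    set tb := max T1 ((S T1 + cm * T1 - S0) / cm + 1) with htbdef
    have htb1 : T1 ≤ tb := le_max_left _ _
    have h4 := hphi tb htb1
    have h5 : S0 ≤ S tb := hcase tb (le_trans hT1nn htb1)
    have h6 : (S T1 + cm * T1 - S0) / cm + 1 ≤ tb := le_max_right _ _
    have h7 : S T1 + cm * T1 - S0 < cm * tb := by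
      have h8 : (S T1 + cm * T1 - S0) / cm ≤ tb - 1 := by linarith
      have h9 := (div_le_iff₀ hcm).1 h8
      nlinarith
    linarith
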